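/- Let ε₀ > 0 and let ρ₁, ρ₂, ρ₃ : (0, ε₀) → ℝ be bounded functions with ρ₁(ε) + ρ₂(ε) + ρ₃(ε) = 0 for all ε, and set γ_{ε,i} := e^{ε ρ_i(ε)}. Then there exist constants c > 0 and C > 0 such that for every ε ∈ (0, ε₀) and every X ∈ ℝ^{3×3} with det X = 1: σ₁(X)²/γ_{ε,1}² + σ₂(X)²/γ_{ε,2}² + σ₃(X)²/γ_{ε,3}² − 3 ≥ c (σ₁(X) − 1)² + c (σ₂(X) − 1)² + c (σ₃(X) − 1)² − C ε². -/

import Mathlib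

open MeasureTheory Filter Matrix

noncomputable def frobSq {n : ℕ} (X : Matrix (Fin n) (Fin n) ℝ) : ℝ := ∑ i, ∑ j, (X i j)^2
noncomputable def frob {n : ℕ} (X : Matrix (Fin n) (Fin n) ℝ) : ℝ := Real.sqrt (frobSq X)
noncomputable def msym {n : ℕ} (X : Matrix (Fin n) (Fin n) ℝ) : Matrix (Fin n) (Fin n) ℝ :=
  (1/2 : ℝ) • (X + Xᵀ)
noncomputable def mdev {n : ℕ} (X : Matrix (Fin n) (Fin n) ℝ) : Matrix (Fin n) (Fin n) ℝ :=
  X - (X.trace / n) • (1 : Matrix (Fin n) (Fin n) ℝ)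
noncomputable def mils {n : ℕ} (X : Matrix (Fin n) (Fin n) ℝ) : Matrix (Fin n) (Fin n) ℝ :=
  msym X - (X.trace / n) • (1 : Matrix (Fin n) (Fin n) ℝ)

/-- Matrix exponential, defined by its power series. -/
noncomputable def mexp {n : ℕ} (A : Matrix (Fin n) (Fin n) ℝ) : Matrix (Fin n) (Fin n) ℝ :=
  ∑' k : ℕ, ((k.factorial : ℝ)⁻¹) • A ^ k

/-- The eigenvalues of a symmetric real matrix, listed in ascending order
(and junk value `0` if the matrix is not symmetric). -/
noncomputable def sortedEig {n : ℕ} (A : Matrix (Fin n) (Fin n) ℝ) : Fin n → ℝ :=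
  if hA : A.IsHermitian then fun i => hA.eigenvalues (Tuple.sort hA.eigenvalues i) else 0

/-- The singular values of a real square matrix in ascending order. -/
noncomputable def singVals {n : ℕ} (X : Matrix (Fin n) (Fin n) ℝ) : Fin n → ℝ :=
  fun i => Real.sqrt (sortedEig (Xᵀ * X) i)

/-- The Jacobian matrix of a map `ℝ^n → ℝ^n`. -/
noncomputable def jac {n : ℕ} (u : EuclideanSpace ℝ (Fin n) → EuclideanSpace ℝ (Fin n))
    (x : EuclideanSpace ℝ (Fin n)) : Matrix (Fin n) (Fin n) ℝ :=
  fun i j => fderiv ℝ u x (EuclideanSpace.single j 1) i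

lemma amgm3' (a b c : ℝ) (ha : 0 ≤ a) (hb : 0 ≤ b) (hc : 0 ≤ c) (h : a * b * c = 1) :
    3 ≤ a + b + c := by
  have h3 : 27 ≤ (a + b + c)^3 := by
    nlinarith [mul_nonneg (add_nonneg (add_nonneg ha hb) hc) (sq_nonneg (a-b)),
      mul_nonneg (add_nonneg (add_nonneg ha hb) hc) (sq_nonneg (b-c)),
      mul_nonneg (add_nonneg (add_nonneg ha hb) hc) (sq_nonneg (a-c)),
      mul_nonneg hc (sq_nonneg (a-b)), mul_nonneg ha (sq_nonneg (b-c)),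
      mul_nonneg hb (sq_nonneg (a-c))]
  nlinarith [add_nonneg (add_nonneg ha hb) hc, sq_nonneg (a+b+c-3), sq_nonneg (a+b+c+3)]

lemma expsq' (x : ℝ) : (Real.exp x - 1)^2 ≤ x^2 * Real.exp (2*|x|) := by
  have key : |Real.exp x - 1| ≤ |x| * Real.exp |x| := by
    rcases le_or_gt 0 x with h | h
    · rw [abs_of_nonneg h, abs_of_nonneg (by nlinarith [Real.one_le_exp h] : (0:ℝ) ≤ Real.exp x - 1)]
      have h1 : Real.exp x * Real.exp (-x) = 1 := by rw [← Real.exp_add]; simp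
      nlinarith [Real.add_one_le_exp (-x), Real.exp_pos x]
    · rw [abs_of_neg h, abs_of_nonpos (by nlinarith [Real.exp_lt_one_iff.mpr h] : Real.exp x - 1 ≤ 0)]
      nlinarith [Real.add_one_le_exp x, Real.one_le_exp (neg_nonneg.mpr h.le)]
  calc (Real.exp x - 1)^2 = |Real.exp x - 1|^2 := (sq_abs _).symm
    _ ≤ (|x| * Real.exp |x|)^2 := by
        apply pow_le_pow_left₀ (abs_nonneg _) key
    _ = x^2 * Real.exp (2*|x|) := by
        rw [mul_pow, sq_abs, ← Real.exp_nat_mul]; ring_nf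

lemma keylemma' (s h c K : ℝ) (h2c : 2*c ≤ h^2) (hK : (h-1)^2 ≤ K) :
    c*(s-1)^2 - K + 2*(s*h) - 1 ≤ (s*h)^2 := by
  nlinarith [sq_nonneg (h*(s-1) + 2*(h-1)), sq_nonneg (s-1),
    mul_nonneg (by linarith : (0:ℝ) ≤ h^2 - 2*c) (sq_nonneg (s-1))]

set_option maxHeartbeats 1000000 in
lemma prod_singVals {n : ℕ} (X : Matrix (Fin n) (Fin n) ℝ) (h : X.det = 1) :
    ∏ i, singVals X i = 1 := by
  have hA : (Xᵀ * X).IsHermitian := by simpa using isHermitian_conjTranspose_mul_self X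
  have hps : (Xᵀ * X).PosSemidef := by simpa using posSemidef_conjTranspose_mul_self X
  have hnn : ∀ i, 0 ≤ hA.eigenvalues i := fun i => hps.eigenvalues_nonneg i
  have hdet : (∏ i, hA.eigenvalues i) = 1 := by
    have := hA.det_eq_prod_eigenvalues
    rw [det_mul, det_transpose, h] at this
    simpa using this.symm
  have hse : ∀ i, sortedEig (Xᵀ * X) i = hA.eigenvalues (Tuple.sort hA.eigenvalues i) := by
    intro i; rw [sortedEig, dif_pos hA]
  have h2 : (∏ i, Real.sqrt (hA.eigenvalues i)) ^ 2 = ∏ i, hA.eigenvalues i := by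
    rw [← Finset.prod_pow]
    exact Finset.prod_congr rfl fun i _ => Real.sq_sqrt (hnn i)
  have h3 : (∏ i, Real.sqrt (hA.eigenvalues i)) = 1 := by
    have hpn : 0 ≤ ∏ i, Real.sqrt (hA.eigenvalues i) :=
      Finset.prod_nonneg fun i _ => Real.sqrt_nonneg _
    nlinarith [h2, hdet]
  calc ∏ i, singVals X i
      = ∏ i, Real.sqrt (hA.eigenvalues (Tuple.sort hA.eigenvalues i)) := by
        refine Finset.prod_congr rfl fun i _ => ?_
        rw [singVals, hse]
    _ = ∏ i, Real.sqrt (hA.eigenvalues i) := Equiv.prod_comp (Tuple.sort hA.eigenvalues) (fun i => Real.sqrt (hA.eigenvalues i))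
    _ = 1 := h3

/-- Coercivity of the Bladon–Terentjev–Warner energy: with preferred strains
`γ_{ε,i} = e^{ε ρ_i(ε)}` (bounded `ρ_i` summing to zero), the stored energy
`Σ σ_i(X)²/γ_{ε,i}² − 3` dominates `c Σ (σ_i(X) − 1)² − C ε²` on `SL(3)`. -/
theorem stmt10 (ε₀ : ℝ) (hε₀ : 0 < ε₀) (ρ : Fin 3 → ℝ → ℝ)
    (hbdd : ∀ i, ∃ M : ℝ, ∀ ε ∈ Set.Ioo 0 ε₀, |ρ i ε| ≤ M)
    (hsum : ∀ ε ∈ Set.Ioo 0 ε₀, ρ 0 ε + ρ 1 ε + ρ 2 ε = 0) :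
    ∃ c > (0 : ℝ), ∃ C > (0 : ℝ), ∀ ε ∈ Set.Ioo 0 ε₀,
      ∀ X : Matrix (Fin 3) (Fin 3) ℝ, X.det = 1 →
        (∑ i, (singVals X i) ^ 2 / (Real.exp (ε * ρ i ε)) ^ 2) - 3 ≥
          (∑ i, c * (singVals X i - 1) ^ 2) - C * ε ^ 2 := by
  obtain ⟨M0, h0⟩ := hbdd 0
  obtain ⟨M1, h1⟩ := hbdd 1
  obtain ⟨M2, h2⟩ := hbdd 2
  set M : ℝ := |M0| + |M1| + |M2| + 1 with hM
  have hMpos : 0 < M := by positivity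
  have hMb : ∀ i, ∀ ε ∈ Set.Ioo 0 ε₀, |ρ i ε| ≤ M := by
    intro i ε hε
    fin_cases i
    · exact le_trans (h0 ε hε) (by have := le_abs_self M0; simp only [hM]; linarith [abs_nonneg M1, abs_nonneg M2])
    · exact le_trans (h1 ε hε) (by have := le_abs_self M1; simp only [hM]; linarith [abs_nonneg M0, abs_nonneg M2])
    · exact le_trans (h2 ε hε) (by have := le_abs_self M2; simp only [hM]; linarith [abs_nonneg M0, abs_nonneg M1])
  refine ⟨Real.exp (-(2*ε₀*M)) / 2, by positivity, 3 * M^2 * Real.exp (2*ε₀*M), by positivity,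
    fun ε hε X hX => ?_⟩
  set c : ℝ := Real.exp (-(2*ε₀*M)) / 2 with hc
  set K : ℝ := M^2 * Real.exp (2*ε₀*M) * ε^2 with hKdef
  obtain ⟨hε1, hε2⟩ := hε
  -- singular values
  set s : Fin 3 → ℝ := singVals X with hs
  have hsnn : ∀ i, 0 ≤ s i := fun i => Real.sqrt_nonneg _
  have hprod : s 0 * s 1 * s 2 = 1 := by
    have := prod_singVals X hX
    rwa [Fin.prod_univ_three] at this
  set h : Fin 3 → ℝ := fun i => Real.exp (-(ε * ρ i ε)) with hhdef
  have hhpos : ∀ i, 0 < h i := fun i => Real.exp_pos _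
  -- product of h is 1
  have hhprod : h 0 * h 1 * h 2 = 1 := by
    simp only [hhdef, ← Real.exp_add]
    rw [show -(ε * ρ 0 ε) + -(ε * ρ 1 ε) + -(ε * ρ 2 ε) = -(ε * (ρ 0 ε + ρ 1 ε + ρ 2 ε)) by ring,
      hsum ε ⟨hε1, hε2⟩]
    simp
  -- AM-GM
  have hamgm : 3 ≤ s 0 * h 0 + s 1 * h 1 + s 2 * h 2 := by
    apply amgm3' _ _ _ (mul_nonneg (hsnn 0) (hhpos 0).le) (mul_nonneg (hsnn 1) (hhpos 1).le)
      (mul_nonneg (hsnn 2) (hhpos 2).le)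
    calc s 0 * h 0 * (s 1 * h 1) * (s 2 * h 2) = (s 0 * s 1 * s 2) * (h 0 * h 1 * h 2) := by ring
      _ = 1 := by rw [hprod, hhprod, mul_one]
  -- per-index facts
  have hdiv : ∀ i, (s i)^2 / (Real.exp (ε * ρ i ε))^2 = (s i * h i)^2 := by
    intro i
    rw [hhdef]
    simp only [Real.exp_neg]
    field_simp
  have h2c : ∀ i, 2*c ≤ (h i)^2 := by
    intro i
    have hb := hMb i ε ⟨hε1, hε2⟩
    have : (h i)^2 = Real.exp (2 * -(ε * ρ i ε)) := by
      rw [hhdef]; rw [← Real.exp_nat_mul]; norm_num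
    rw [this]
    have h2c' : 2*c = Real.exp (-(2*ε₀*M)) := by rw [hc]; ring
    rw [h2c']
    apply Real.exp_le_exp.mpr
    have hρ : ρ i ε ≤ M := (abs_le.mp hb).2
    have ha : ε * ρ i ε ≤ ε * M := mul_le_mul_of_nonneg_left hρ hε1.le
    have hb2 : ε * M ≤ ε₀ * M := mul_le_mul_of_nonneg_right hε2.le hMpos.le
    linarith
  have hKb : ∀ i, (h i - 1)^2 ≤ K := by
    intro i
    have hb := hMb i ε ⟨hε1, hε2⟩
    have e1 := expsq' (-(ε * ρ i ε))
    rw [hhdef]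
    refine le_trans e1 ?_
    rw [hKdef]
    have hρ2 : (ρ i ε)^2 ≤ M^2 := by
      nlinarith [mul_self_le_mul_self (abs_nonneg (ρ i ε)) hb, sq_abs (ρ i ε)]
    have hx2 : (-(ε * ρ i ε))^2 ≤ M^2 * ε^2 := by
      nlinarith [mul_le_mul_of_nonneg_left hρ2 (sq_nonneg ε)]
    have hxe : Real.exp (2*|(-(ε * ρ i ε))|) ≤ Real.exp (2*ε₀*M) := by
      apply Real.exp_le_exp.mpr
      rw [abs_neg, abs_mul, abs_of_pos hε1]
      nlinarith [mul_le_mul hε2.le hb (abs_nonneg (ρ i ε)) hε₀.le]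
    calc (-(ε * ρ i ε))^2 * Real.exp (2*|(-(ε * ρ i ε))|)
        ≤ (M^2 * ε^2) * Real.exp (2*ε₀*M) :=
          mul_le_mul hx2 hxe (Real.exp_nonneg _) (by positivity)
      _ = M^2 * Real.exp (2*ε₀*M) * ε^2 := by ring
  have key : ∀ i, c*(s i - 1)^2 - K + 2*(s i * h i) - 1 ≤ (s i * h i)^2 :=
    fun i => keylemma' (s i) (h i) c K (h2c i) (hKb i)
  -- assemble
  rw [ge_iff_le, Fin.sum_univ_three, Fin.sum_univ_three]
  rw [hdiv 0, hdiv 1, hdiv 2]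
  have k0 := key 0; have k1 := key 1; have k2 := key 2
  have : 3 * M ^ 2 * Real.exp (2 * ε₀ * M) * ε ^ 2 = 3 * K := by rw [hKdef]; ring
  rw [this]
  linarith [hamgm]
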